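/- Let F be a positive CNF formula with k variables and n ≥ 1 clauses (each clause a nonempty subset of the variables), where k is even and k ≥ 1. Then the connected domination number of G_F satisfies γ_c(G_F) = 3k + 3n + 8. -/

import Mathlib

namespace CDG

/-- Vertices of the graph `B`. -/
inductive BVert : Type
  | a | e | b | b' | h | k | f1 | g1 | f2 | g2

/-- The edges of the graph `B`. -/
def BRel : BVert → BVert → Prop
  | .a, .e => True
  | .e, .b => True
  | .b, .b' => True
  | .a, .h => True
  | .h, .e => True
  | .e, .f1 => True
  | .f1, .b => True
  | .b, .f2 => True
  | .f2, .e => True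
  | .e, .g1 => True
  | .g1, .f1 => True
  | .e, .g2 => True
  | .g2, .f2 => True
  | .h, .k => True
  | .k, .a => True
  | _, _ => False

/-- The graph `B`. -/
def graphB : SimpleGraph BVert := SimpleGraph.fromRel BRel

/-- `S` is a connected dominating set of `G`: every vertex is in `S` or adjacent to a
vertex of `S`, and the subgraph induced by `S` is connected. -/
def IsConnDomSet {V : Type*} (G : SimpleGraph V) (S : Set V) : Prop :=
  (∀ v : V, v ∈ S ∨ ∃ u ∈ S, G.Adj u v) ∧ (G.induce S).Connected

/-- The connected domination number of `G`. -/
noncomputable def connDomNum {V : Type*} (G : SimpleGraph V) : ℕ :=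
  sInf {m | ∃ S : Set V, IsConnDomSet G S ∧ S.ncard = m}

/-- Vertices of the graph `H n`: `u i` is `u_i` for `0 ≤ i ≤ n+1`, `x t` is `x_{t+1}` and
`y t` is `y_{t+1}` for `0 ≤ t ≤ n-2`. -/
inductive HVert (n : ℕ) : Type
  | u : Fin (n + 2) → HVert n
  | x : Fin (n - 1) → HVert n
  | y : Fin (n - 1) → HVert n

/-- The edges of the graph `H n`. -/
def HRel (n : ℕ) : HVert n → HVert n → Prop
  | .u i, .u j => (j : ℕ) = (i : ℕ) + 1
  | .u i, .x t => (i : ℕ) = (t : ℕ) + 1 ∨ (i : ℕ) = (t : ℕ) + 2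
  | .x t, .y s => t = s
  | .y s, .u i => (i : ℕ) = (s : ℕ) + 2
  | _, _ => False

/-- The graph `H n`. -/
def graphH (n : ℕ) : SimpleGraph (HVert n) := SimpleGraph.fromRel (HRel n)

/-- Vertices of the graph `C m`: `cc i` is `c^{i+1}` and `dd i` is `d^{i+1}` for `0 ≤ i ≤ m-1`. -/
inductive CVert (m : ℕ) : Type
  | c : CVert m
  | d : CVert m
  | cc : Fin m → CVert m
  | dd : Fin m → CVert m

/-- The edges of the graph `C m`. -/
def CRel (m : ℕ) : CVert m → CVert m → Prop
  | .c, .d => True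
  | .c, .dd _ => True
  | .cc i, .dd j => i = j
  | _, _ => False

/-- The graph `C m`. -/
def graphC (m : ℕ) : SimpleGraph (CVert m) := SimpleGraph.fromRel (CRel m)

/-- Vertices of the graph `A`. -/
inductive AVert : Type
  | p1 | p2 | p3 | q1 | q2 | r1 | r2

/-- The edges of the graph `A`. -/
def ARel : AVert → AVert → Prop
  | .p1, .p2 => True
  | .p2, .p3 => True
  | .p1, .q1 => True
  | .q1, .r1 => True
  | .p2, .q1 => True
  | .p2, .r1 => True
  | .p2, .q2 => True
  | .q2, .r2 => True
  | .p3, .q2 => True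
  | .p3, .r2 => True
  | _, _ => False

/-- Vertices of the graph `G_F`, for a formula with `k` variables and `n` clauses:
`k` copies of `B`, `n` copies of `C n`, one copy of `H (2n+7)`, and a copy of `A`
exactly when `k` is odd (realized as `AVert × Fin (k % 2)`). -/
abbrev GVert (k n : ℕ) : Type :=
  (Fin k × BVert) ⊕ (Fin n × CVert n) ⊕ HVert (2 * n + 7) ⊕ (AVert × Fin (k % 2))

/-- The edges of the graph `G_F`, where the formula `F` assigns to each clause `j`
the (nonempty) set of variables appearing in it. -/
def GRel (k n : ℕ) (F : Fin n → Finset (Fin k)) : GVert k n → GVert k n → Prop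
  | .inl (i, v), .inl (i', w) => i = i' ∧ BRel v w
  | .inr (.inl (j, v)), .inr (.inl (j', w)) => j = j' ∧ CRel n v w
  | .inr (.inr (.inl v)), .inr (.inr (.inl w)) => HRel (2 * n + 7) v w
  | .inr (.inr (.inr (v, _))), .inr (.inr (.inr (w, _))) => ARel v w
  | .inr (.inl (j, v)), .inl (i, w) =>
      i ∈ F j ∧ w = .a ∧ (v = .c ∨ ∃ t, v = .cc t)
  | .inr (.inr (.inl v)), .inl (i, w) =>
      v = .u ⟨0, by omega⟩ ∧ (w = .a ∨ w = .b)
  | .inr (.inr (.inr (v, _))), .inr (.inr (.inl w)) =>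
      v = .p1 ∧ w = .u ⟨0, by omega⟩
  | _, _ => False

/-- The graph `G_F`. -/
def graphGF (k n : ℕ) (F : Fin n → Finset (Fin k)) : SimpleGraph (GVert k n) :=
  SimpleGraph.fromRel (GRel k n F)

/-- Vertices of the graph `G'_F`, for a formula with `k` variables and `n` clauses:
`k` copies of `B`, `n` copies of `C n`, one copy of `H 6`, and a copy of `A`
exactly when `k` is odd (realized as `AVert × Fin (k % 2)`). -/
abbrev GVert' (k n : ℕ) : Type :=
  (Fin k × BVert) ⊕ (Fin n × CVert n) ⊕ HVert 6 ⊕ (AVert × Fin (k % 2))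

/-- The edges of the graph `G'_F`. -/
def GRel' (k n : ℕ) (F : Fin n → Finset (Fin k)) : GVert' k n → GVert' k n → Prop
  | .inl (i, v), .inl (i', w) => i = i' ∧ BRel v w
  | .inr (.inl (j, v)), .inr (.inl (j', w)) => j = j' ∧ CRel n v w
  | .inr (.inr (.inl v)), .inr (.inr (.inl w)) => HRel 6 v w
  | .inr (.inr (.inr (v, _))), .inr (.inr (.inr (w, _))) => ARel v w
  | .inr (.inl (j, v)), .inl (i, w) =>
      i ∈ F j ∧ w = .a ∧ (v = .c ∨ ∃ t, v = .cc t)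
  | .inr (.inr (.inl v)), .inl (i, w) =>
      v = .u ⟨7, by omega⟩ ∧ (w = .a ∨ w = .b)
  | .inr (.inr (.inr (v, _))), .inr (.inr (.inl w)) =>
      v = .p1 ∧ w = .u ⟨7, by omega⟩
  | _, _ => False

/-- The graph `G'_F`. -/
def graphGF' (k n : ℕ) (F : Fin n → Finset (Fin k)) : SimpleGraph (GVert' k n) :=
  SimpleGraph.fromRel (GRel' k n F)

deriving instance DecidableEq for BVert
instance : Fintype BVert :=
  ⟨{.a, .e, .b, .b', .h, .k, .f1, .g1, .f2, .g2}, fun x => by cases x <;> simp⟩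
deriving instance DecidableEq for AVert
instance : Fintype AVert :=
  ⟨{.p1, .p2, .p3, .q1, .q2, .r1, .r2}, fun x => by cases x <;> simp⟩
deriving instance DecidableEq for HVert
deriving instance DecidableEq for CVert

instance finiteHVert (n : ℕ) : Finite (HVert n) := by
  classical
  have : Function.Surjective (fun z : Fin (n+2) ⊕ Fin (n-1) ⊕ Fin (n-1) =>
    match z with | .inl i => HVert.u i | .inr (.inl i) => HVert.x i | .inr (.inr i) => HVert.y i) := by
    intro v; cases v with
    | u i => exact ⟨.inl i, rfl⟩
    | x i => exact ⟨.inr (.inl i), rfl⟩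
    | y i => exact ⟨.inr (.inr i), rfl⟩
  exact Finite.of_surjective _ this

instance finiteCVert (m : ℕ) : Finite (CVert m) := by
  classical
  have : Function.Surjective (fun z : Fin 2 ⊕ Fin m ⊕ Fin m =>
    match z with | .inl 0 => CVert.c | .inl 1 => CVert.d | .inr (.inl i) => CVert.cc i
                 | .inr (.inr i) => CVert.dd i) := by
    intro v; cases v with
    | c => exact ⟨.inl 0, rfl⟩
    | d => exact ⟨.inl 1, rfl⟩
    | cc i => exact ⟨.inr (.inl i), rfl⟩
    | dd i => exact ⟨.inr (.inr i), rfl⟩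
  exact Finite.of_surjective _ this

/-- The explicit connected dominating set. -/
def upFinset (k n : ℕ) [DecidableEq (GVert k n)] : Finset (GVert k n) :=
  ((Finset.univ : Finset (Fin k)) ×ˢ ({.a, .e, .b} : Finset BVert)).image Sum.inl
  ∪ (Finset.univ : Finset (Fin n)).image (fun j => Sum.inr (Sum.inl (j, CVert.c)))
  ∪ (Finset.univ : Finset (Fin (2*n+8))).image
      (fun t => Sum.inr (Sum.inr (Sum.inl (HVert.u t.castSucc))))

lemma upFinset_card (k n : ℕ) [DecidableEq (GVert k n)] :
    (upFinset k n).card = 3 * k + 3 * n + 8 := by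
  rw [upFinset]
  rw [Finset.card_union_of_disjoint, Finset.card_union_of_disjoint]
  · rw [Finset.card_image_of_injective _ Sum.inl_injective,
      Finset.card_image_of_injective, Finset.card_image_of_injective]
    · simp [Finset.card_product]
      omega
    · intro s t h
      simp only [Sum.inr.injEq, Sum.inl.injEq, HVert.u.injEq] at h
      exact Fin.castSucc_injective _ h
    · intro s t h
      simp only [Sum.inr.injEq, Sum.inl.injEq, Prod.mk.injEq] at h
      exact h.1
  · rw [Finset.disjoint_left]
    intro v hv hv'
    simp only [Finset.mem_image] at hv hv'
    obtain ⟨_, _, rfl⟩ := hv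
    obtain ⟨_, _, h⟩ := hv'
    simp at h
  · rw [Finset.disjoint_left]
    intro v hv hv'
    simp only [Finset.mem_union, Finset.mem_image] at hv hv'
    obtain ⟨_, _, h⟩ := hv'
    rcases hv with ⟨⟨_, _, rfl⟩⟩ | ⟨_, _, rfl⟩ <;> simp at h
/-- The explicit connected dominating set, as a set. -/
def upSet (k n : ℕ) : Set (GVert k n) :=
  {v | match v with
    | .inl (_, w) => w = .a ∨ w = .e ∨ w = .b
    | .inr (.inl (_, w)) => w = .c
    | .inr (.inr (.inl (.u t))) => (t : ℕ) ≤ 2*n+7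
    | _ => False}

lemma coe_upFinset (k n : ℕ) [DecidableEq (GVert k n)] :
    (upFinset k n : Set (GVert k n)) = upSet k n := by
  ext v
  simp only [Finset.mem_coe]
  constructor
  · intro hv
    simp only [upFinset, Finset.mem_union, Finset.mem_image, Finset.mem_product,
      Finset.mem_univ, Finset.mem_insert, Finset.mem_singleton, true_and] at hv
    rcases hv with (⟨⟨i, w⟩, hw, rfl⟩ | ⟨j, _, rfl⟩) | ⟨t, _, rfl⟩
    · exact hw
    · exact rfl
    · show ((t.castSucc : Fin (2*n+9)) : ℕ) ≤ 2*n+7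
      have := t.isLt
      simp only [Fin.coe_castSucc]
      omega
  · intro hv
    simp only [upFinset, Finset.mem_union, Finset.mem_image, Finset.mem_product,
      Finset.mem_univ, Finset.mem_insert, Finset.mem_singleton, true_and]
    rcases v with ⟨i, w⟩ | ⟨⟨j, w⟩ | ⟨w | ⟨w, z⟩⟩⟩
    · exact Or.inl (Or.inl ⟨(i, w), hv, rfl⟩)
    · cases w with
      | c => exact Or.inl (Or.inr ⟨j, rfl⟩)
      | d => exact absurd hv (by simp [upSet])
      | cc t => exact absurd hv (by simp [upSet])
      | dd t => exact absurd hv (by simp [upSet])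
    · cases w with
      | u t =>
        have ht : (t : ℕ) ≤ 2*n+7 := hv
        exact Or.inr ⟨⟨(t : ℕ), by omega⟩, rfl⟩
      | x t => exact absurd hv (by simp [upSet])
      | y t => exact absurd hv (by simp [upSet])
    · exact absurd hv (by simp [upSet])

lemma adj_of_grel {k n : ℕ} {F : Fin n → Finset (Fin k)} {u v : GVert k n}
    (hne : u ≠ v) (h : GRel k n F u v) : (graphGF k n F).Adj u v := by
  rw [graphGF, SimpleGraph.fromRel_adj]; exact ⟨hne, Or.inl h⟩

lemma adj_of_grel' {k n : ℕ} {F : Fin n → Finset (Fin k)} {u v : GVert k n}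
    (hne : u ≠ v) (h : GRel k n F v u) : (graphGF k n F).Adj u v := by
  rw [graphGF, SimpleGraph.fromRel_adj]; exact ⟨hne, Or.inr h⟩

lemma upSet_dom (k n : ℕ) (hkeven : Even k) (F : Fin n → Finset (Fin k))
    (hF : ∀ j, (F j).Nonempty) :
    ∀ v : GVert k n, v ∈ upSet k n ∨ ∃ u ∈ upSet k n, (graphGF k n F).Adj u v := by
  intro v
  rcases v with ⟨i, w⟩ | ⟨⟨j, w⟩ | ⟨w | ⟨w, z⟩⟩⟩
  · cases w with
    | a => exact Or.inl (Or.inl rfl)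
    | e => exact Or.inl (Or.inr (Or.inl rfl))
    | b => exact Or.inl (Or.inr (Or.inr rfl))
    | b' => exact Or.inr ⟨.inl (i, .b), Or.inr (Or.inr rfl),
        adj_of_grel (by simp) ⟨rfl, trivial⟩⟩
    | h => exact Or.inr ⟨.inl (i, .a), Or.inl rfl, adj_of_grel (by simp) ⟨rfl, trivial⟩⟩
    | k => exact Or.inr ⟨.inl (i, .a), Or.inl rfl, adj_of_grel' (by simp) ⟨rfl, trivial⟩⟩
    | f1 => exact Or.inr ⟨.inl (i, .e), Or.inr (Or.inl rfl),
        adj_of_grel (by simp) ⟨rfl, trivial⟩⟩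
    | f2 => exact Or.inr ⟨.inl (i, .e), Or.inr (Or.inl rfl),
        adj_of_grel' (by simp) ⟨rfl, trivial⟩⟩
    | g1 => exact Or.inr ⟨.inl (i, .e), Or.inr (Or.inl rfl),
        adj_of_grel (by simp) ⟨rfl, trivial⟩⟩
    | g2 => exact Or.inr ⟨.inl (i, .e), Or.inr (Or.inl rfl),
        adj_of_grel (by simp) ⟨rfl, trivial⟩⟩
  · cases w with
    | c => exact Or.inl rfl
    | d => exact Or.inr ⟨.inr (.inl (j, .c)), rfl, adj_of_grel (by simp) ⟨rfl, trivial⟩⟩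
    | dd t => exact Or.inr ⟨.inr (.inl (j, .c)), rfl, adj_of_grel (by simp) ⟨rfl, trivial⟩⟩
    | cc t =>
      exact Or.inr ⟨.inl ((hF j).choose, .a), Or.inl rfl,
        adj_of_grel' (by simp) ⟨(hF j).choose_spec, rfl, Or.inr ⟨t, rfl⟩⟩⟩
  · cases w with
    | u t =>
      by_cases ht : (t : ℕ) ≤ 2*n+7
      · exact Or.inl ht
      · have ht' := t.isLt
        refine Or.inr ⟨.inr (.inr (.inl (.u ⟨2*n+7, by omega⟩))), by show 2*n+7 ≤ 2*n+7; omega,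
          adj_of_grel ?_ ?_⟩
        · simp only [ne_eq, Sum.inr.injEq, Sum.inl.injEq, HVert.u.injEq]
          intro hc
          rw [Fin.ext_iff] at hc
          simp at hc
          omega
        · exact (by omega : (t : ℕ) = (2*n+7) + 1)
    | x t =>
      have ht := t.isLt
      refine Or.inr ⟨.inr (.inr (.inl (.u ⟨(t:ℕ)+1, by omega⟩))), by show (t:ℕ)+1 ≤ 2*n+7; omega,
        adj_of_grel (by simp) (Or.inl rfl)⟩
    | y t =>
      have ht := t.isLt
      refine Or.inr ⟨.inr (.inr (.inl (.u ⟨(t:ℕ)+2, by omega⟩))), by show (t:ℕ)+2 ≤ 2*n+7; omega,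
        adj_of_grel' (by simp) rfl⟩
  · have h2 : k % 2 = 0 := Nat.even_iff.mp hkeven
    exact absurd z.isLt (by omega)
lemma induce_adj_of {V : Type*} {G : SimpleGraph V} {S : Set V} {a b : ↥S}
    (h : G.Adj a.val b.val) : (G.induce S).Adj a b := h

lemma upSet_connected (k n : ℕ) (hk : 1 ≤ k) (F : Fin n → Finset (Fin k))
    (hF : ∀ j, (F j).Nonempty) :
    ((graphGF k n F).induce (upSet k n)).Connected := by
  set G := (graphGF k n F).induce (upSet k n) with hG
  have h0 : (0 : ℕ) ≤ 2*n+7 := by omega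
  set u0 : ↥(upSet k n) := ⟨.inr (.inr (.inl (.u ⟨0, by omega⟩))), h0⟩ with hu0
  have hreach_u : ∀ m : ℕ, ∀ hm : m ≤ 2*n+7,
      G.Reachable u0 ⟨.inr (.inr (.inl (.u ⟨m, by omega⟩))), hm⟩ := by
    intro m
    induction m with
    | zero => intro hm; rfl
    | succ m ih =>
      intro hm
      have hm' : m ≤ 2*n+7 := by omega
      refine (ih hm').trans (SimpleGraph.Adj.reachable (induce_adj_of (adj_of_grel ?_ ?_)))
      · simp only [ne_eq, Sum.inr.injEq, Sum.inl.injEq, HVert.u.injEq, Fin.mk.injEq]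
        omega
      · exact (rfl : (m + 1 : ℕ) = m + 1)
  have hreach_a : ∀ i : Fin k, ∀ h : _,
      G.Reachable u0 ⟨.inl (i, .a), h⟩ := by
    intro i h
    exact SimpleGraph.Adj.reachable (induce_adj_of (adj_of_grel (by simp) ⟨rfl, Or.inl rfl⟩))
  have hreach_e : ∀ i : Fin k, ∀ h : _,
      G.Reachable u0 ⟨.inl (i, .e), h⟩ := by
    intro i h
    exact (hreach_a i (Or.inl rfl)).trans
      (SimpleGraph.Adj.reachable (induce_adj_of (adj_of_grel (by simp) ⟨rfl, trivial⟩)))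
  have hreach_all : ∀ v : GVert k n, ∀ hv : v ∈ upSet k n, G.Reachable u0 ⟨v, hv⟩ := by
    intro v hv
    rcases v with ⟨i, w⟩ | ⟨⟨j, w⟩ | ⟨w | ⟨w, z⟩⟩⟩
    · have hw : w = .a ∨ w = .e ∨ w = .b := hv
      rcases hw with rfl | rfl | rfl
      · exact hreach_a i hv
      · exact hreach_e i hv
      · exact (hreach_e i (Or.inr (Or.inl rfl))).trans
          (SimpleGraph.Adj.reachable (induce_adj_of (adj_of_grel (by simp) ⟨rfl, trivial⟩)))
    · cases w with
      | c =>
        exact (hreach_a (hF j).choose (Or.inl rfl)).trans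
          (SimpleGraph.Adj.reachable (induce_adj_of (adj_of_grel' (by simp)
            ⟨(hF j).choose_spec, rfl, Or.inl rfl⟩)))
      | d => exact absurd hv (by simp [upSet])
      | cc t => exact absurd hv (by simp [upSet])
      | dd t => exact absurd hv (by simp [upSet])
    · cases w with
      | u t => exact hreach_u (t : ℕ) hv
      | x t => exact absurd hv (by simp [upSet])
      | y t => exact absurd hv (by simp [upSet])
    · exact absurd hv (by simp [upSet])
  rw [SimpleGraph.connected_iff]
  refine ⟨?_, ⟨u0⟩⟩
  rintro ⟨va, hva⟩ ⟨vb, hvb⟩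
  exact (hreach_all va hva).symm.trans (hreach_all vb hvb)
lemma nbhd_k {k n : ℕ} {F : Fin n → Finset (Fin k)} {i : Fin k} {v : GVert k n}
    (h : (graphGF k n F).Adj v (.inl (i, .k))) :
    v = .inl (i, .h) ∨ v = .inl (i, .a) := by
  rw [graphGF, SimpleGraph.fromRel_adj] at h
  obtain ⟨hne, h⟩ := h
  rcases v with ⟨i', w⟩ | ⟨⟨j', w⟩ | ⟨w | ⟨w, z⟩⟩⟩ <;>
    rcases h with h | h <;>
    first
      | exact h.elim
      | (cases w <;> simp_all [GRel, BRel, CRel, HRel])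

lemma nbhd_b' {k n : ℕ} {F : Fin n → Finset (Fin k)} {i : Fin k} {v : GVert k n}
    (h : (graphGF k n F).Adj v (.inl (i, .b'))) :
    v = .inl (i, .b) := by
  rw [graphGF, SimpleGraph.fromRel_adj] at h
  obtain ⟨hne, h⟩ := h
  rcases v with ⟨i', w⟩ | ⟨⟨j', w⟩ | ⟨w | ⟨w, z⟩⟩⟩ <;>
    rcases h with h | h <;>
    first
      | exact h.elim
      | (cases w <;> simp_all [GRel, BRel, CRel, HRel])

lemma nbhd_g1 {k n : ℕ} {F : Fin n → Finset (Fin k)} {i : Fin k} {v : GVert k n}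
    (h : (graphGF k n F).Adj v (.inl (i, .g1))) :
    v = .inl (i, .e) ∨ v = .inl (i, .f1) := by
  rw [graphGF, SimpleGraph.fromRel_adj] at h
  obtain ⟨hne, h⟩ := h
  rcases v with ⟨i', w⟩ | ⟨⟨j', w⟩ | ⟨w | ⟨w, z⟩⟩⟩ <;>
    rcases h with h | h <;>
    first
      | exact h.elim
      | (cases w <;> simp_all [GRel, BRel, CRel, HRel])

lemma nbhd_d {k n : ℕ} {F : Fin n → Finset (Fin k)} {j : Fin n} {v : GVert k n}
    (h : (graphGF k n F).Adj v (.inr (.inl (j, .d)))) :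
    v = .inr (.inl (j, .c)) := by
  rw [graphGF, SimpleGraph.fromRel_adj] at h
  obtain ⟨hne, h⟩ := h
  rcases v with ⟨i', w⟩ | ⟨⟨j', w⟩ | ⟨w | ⟨w, z⟩⟩⟩ <;>
    rcases h with h | h <;>
    first
      | exact h.elim
      | (cases w <;> simp_all [GRel, BRel, CRel, HRel])

lemma nbhd_y {k n : ℕ} {F : Fin n → Finset (Fin k)} {s : Fin (2*n+7-1)} {v : GVert k n}
    (h : (graphGF k n F).Adj v (.inr (.inr (.inl (.y s))))) :
    v = .inr (.inr (.inl (.x s))) ∨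
      v = .inr (.inr (.inl (.u ⟨(s : ℕ)+2, by have := s.isLt; omega⟩))) := by
  rw [graphGF, SimpleGraph.fromRel_adj] at h
  obtain ⟨hne, h⟩ := h
  rcases v with ⟨i', w⟩ | ⟨⟨j', w⟩ | ⟨w | ⟨w, z⟩⟩⟩ <;>
    rcases h with h | h <;>
    first
      | exact h.elim
      | (cases w <;> simp_all [GRel, BRel, CRel, HRel, Fin.ext_iff])
/-- Membership in the `H` part of `G_F`. -/
def inH {k n : ℕ} : GVert k n → Prop
  | .inr (.inr (.inl _)) => True
  | _ => False

lemma cross_u0 {k n : ℕ} {F : Fin n → Finset (Fin k)} {x y : GVert k n}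
    (hadj : (graphGF k n F).Adj x y) (hx : ¬ inH x) (hy : inH y) :
    y = .inr (.inr (.inl (.u ⟨0, by omega⟩))) := by
  rw [graphGF, SimpleGraph.fromRel_adj] at hadj
  obtain ⟨hne, h⟩ := hadj
  rcases y with ⟨i', w⟩ | ⟨⟨j', w⟩ | ⟨w | ⟨w, z⟩⟩⟩
  · exact hy.elim
  · exact hy.elim
  · rcases x with ⟨i', w'⟩ | ⟨⟨j', w'⟩ | ⟨w' | ⟨w', z'⟩⟩⟩
    · rcases h with h | h
      · exact h.elim
      · obtain ⟨h1, -⟩ := h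
        rw [h1]
    · rcases h with h | h
      · exact h.elim
      · exact h.elim
    · exact absurd trivial hx
    · rcases h with h | h
      · obtain ⟨-, h2⟩ := h
        rw [h2]
      · exact h.elim
  · exact hy.elim

lemma cross_u1 {k n : ℕ} {F : Fin n → Finset (Fin k)} {x y : GVert k n}
    (hadj : (graphGF k n F).Adj x y)
    (hx : ¬ (inH x ∧ x ≠ .inr (.inr (.inl (.u ⟨0, by omega⟩)))))
    (hy : inH y ∧ y ≠ .inr (.inr (.inl (.u ⟨0, by omega⟩)))) :
    y = .inr (.inr (.inl (.u ⟨1, by omega⟩))) := by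
  obtain ⟨hy1, hy2⟩ := hy
  by_cases hxh : inH x
  · -- x is in H, so x = u 0
    push_neg at hx
    have hx0 : x = .inr (.inr (.inl (.u ⟨0, by omega⟩))) := hx hxh
    subst hx0
    rw [graphGF, SimpleGraph.fromRel_adj] at hadj
    obtain ⟨hne, h⟩ := hadj
    rcases y with ⟨i', w⟩ | ⟨⟨j', w⟩ | ⟨w | ⟨w, z⟩⟩⟩
    · exact hy1.elim
    · exact hy1.elim
    · have h' : HRel (2*n+7) (.u ⟨0, by omega⟩) w ∨ HRel (2*n+7) w (.u ⟨0, by omega⟩) := h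
      cases w with
      | u t =>
        have ht : (t : ℕ) = 1 := by
          rcases h' with h' | h' <;> simp only [HRel] at h' <;> omega
        simp only [Sum.inr.injEq, Sum.inl.injEq, HVert.u.injEq]
        exact Fin.ext (by simp only [Fin.val_mk]; omega)
      | x t =>
        exfalso
        rcases h' with h' | h' <;> simp only [HRel] at h' <;> omega
      | y t =>
        exfalso
        rcases h' with h' | h' <;> simp only [HRel] at h' <;> omega
    · exact hy1.elim
  · -- x not in H: the only edges into H \ {u 0} from outside H land in u 0
    have := cross_u0 hadj hxh hy1
    exact absurd this hy2

lemma exists_mem_support {W V : Type*} {G : SimpleGraph W} (P : W → Prop) (f : W → V) (c : V)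
    (hcross : ∀ x y, G.Adj x y → ¬ P x → P y → f y = c)
    {a b : W} (w : G.Walk a b) (ha : ¬ P a) (hb : P b) : ∃ z ∈ w.support, f z = c := by
  induction w with
  | nil => exact absurd hb ha
  | @cons a x b hadj p ih =>
    by_cases hx : P x
    · exact ⟨x, by simp, hcross _ _ hadj ha hx⟩
    · obtain ⟨z, hz1, hz2⟩ := ih hx hb
      exact ⟨z, by simp [hz1], hz2⟩

lemma hit {V : Type*} {G : SimpleGraph V} {S : Set V}
    (hdom : ∀ v, v ∈ S ∨ ∃ u ∈ S, G.Adj u v)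
    (v : V) (R : Set V) (hv : v ∈ R) (hN : ∀ u, G.Adj u v → u ∈ R) :
    ∃ s, s ∈ S ∧ s ∈ R := by
  rcases hdom v with h | ⟨u, hu, ha⟩
  exacts [⟨v, h, hv⟩, ⟨u, hu, hN u ha⟩]
/-- Tag type indexing the pairwise disjoint requirement sets. -/
abbrev TT (k n : ℕ) : Type :=
  (Fin k ⊕ Fin k ⊕ Fin k) ⊕ Fin n ⊕ Fin (2*n+6) ⊕ (Unit ⊕ Unit)

/-- The tag of a vertex: which requirement set it belongs to (if any). -/
def tag (k n : ℕ) : GVert k n → Option (TT k n)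
  | .inl (i, w) =>
    match w with
    | .h => some (.inl (.inl i))
    | .k => some (.inl (.inl i))
    | .a => some (.inl (.inl i))
    | .b => some (.inl (.inr (.inl i)))
    | .b' => some (.inl (.inr (.inl i)))
    | .g1 => some (.inl (.inr (.inr i)))
    | .e => some (.inl (.inr (.inr i)))
    | .f1 => some (.inl (.inr (.inr i)))
    | _ => none
  | .inr (.inl (j, w)) =>
    match w with
    | .c => some (.inr (.inl j))
    | .d => some (.inr (.inl j))
    | _ => none
  | .inr (.inr (.inl w)) =>
    match w with
    | .u t =>
      if (t : ℕ) = 0 then some (.inr (.inr (.inr (.inl ()))))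
      else if (t : ℕ) = 1 then some (.inr (.inr (.inr (.inr ()))))
      else if ht2 : (t : ℕ) ≤ 2*n+7 then
        some (.inr (.inr (.inl ⟨(t:ℕ)-2, by omega⟩)))
      else none
    | .x s => some (.inr (.inr (.inl ⟨(s:ℕ), by have := s.isLt; omega⟩)))
    | .y s => some (.inr (.inr (.inl ⟨(s:ℕ), by have := s.isLt; omega⟩)))
  | _ => none

lemma tag_u {k n : ℕ} (t : Fin (2*n+9)) :
    tag k n (.inr (.inr (.inl (.u t)))) =
      if (t : ℕ) = 0 then some (.inr (.inr (.inr (.inl ()))))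
      else if (t : ℕ) = 1 then some (.inr (.inr (.inr (.inr ()))))
      else if ht2 : (t : ℕ) ≤ 2*n+7 then
        some (.inr (.inr (.inl ⟨(t:ℕ)-2, by omega⟩)))
      else none := rfl

/-- The choice of a representative for each tag. -/
def pickFun {k n : ℕ} (f1 f2 f3 : Fin k → GVert k n) (f4 : Fin n → GVert k n)
    (f5 : Fin (2*n+6) → GVert k n) : TT k n → GVert k n
  | .inl (.inl i) => f1 i
  | .inl (.inr (.inl i)) => f2 i
  | .inl (.inr (.inr i)) => f3 i
  | .inr (.inl j) => f4 j
  | .inr (.inr (.inl s)) => f5 s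
  | .inr (.inr (.inr (.inl _))) => .inr (.inr (.inl (.u ⟨0, by omega⟩)))
  | .inr (.inr (.inr (.inr _))) => .inr (.inr (.inl (.u ⟨1, by omega⟩)))

lemma lower_bound (k n : ℕ) (hk : 1 ≤ k) (hn : 1 ≤ n) (F : Fin n → Finset (Fin k))
    (S : Set (GVert k n)) (hS : IsConnDomSet (graphGF k n F) S) :
    3 * k + 3 * n + 8 ≤ S.ncard := by
  classical
  obtain ⟨hdom, hconn⟩ := hS
  -- domination hits
  have hit1 : ∀ i : Fin k, ∃ s, s ∈ S ∧
      (s = .inl (i, .h) ∨ s = .inl (i, .k) ∨ s = .inl (i, .a)) := fun i =>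
    hit hdom (.inl (i, .k))
      {v | v = .inl (i, .h) ∨ v = .inl (i, .k) ∨ v = .inl (i, .a)}
      (Or.inr (Or.inl rfl))
      (fun u hu => (nbhd_k hu).imp id (fun h => Or.inr h))
  have hit2 : ∀ i : Fin k, ∃ s, s ∈ S ∧
      (s = .inl (i, .b) ∨ s = .inl (i, .b')) := fun i =>
    hit hdom (.inl (i, .b')) {v | v = .inl (i, .b) ∨ v = .inl (i, .b')}
      (Or.inr rfl) (fun u hu => Or.inl (nbhd_b' hu))
  have hit3 : ∀ i : Fin k, ∃ s, s ∈ S ∧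
      (s = .inl (i, .g1) ∨ s = .inl (i, .e) ∨ s = .inl (i, .f1)) := fun i =>
    hit hdom (.inl (i, .g1))
      {v | v = .inl (i, .g1) ∨ v = .inl (i, .e) ∨ v = .inl (i, .f1)}
      (Or.inl rfl) (fun u hu => Or.inr (nbhd_g1 hu))
  have hit4 : ∀ j : Fin n, ∃ s, s ∈ S ∧
      (s = .inr (.inl (j, .c)) ∨ s = .inr (.inl (j, .d))) := fun j =>
    hit hdom (.inr (.inl (j, .d)))
      {v | v = .inr (.inl (j, .c)) ∨ v = .inr (.inl (j, .d))}
      (Or.inr rfl) (fun u hu => Or.inl (nbhd_d hu))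
  have hit5 : ∀ s : Fin (2*n+6), ∃ v, v ∈ S ∧
      (v = .inr (.inr (.inl (.x ⟨(s:ℕ), by have := s.isLt; omega⟩))) ∨
       v = .inr (.inr (.inl (.y ⟨(s:ℕ), by have := s.isLt; omega⟩))) ∨
       v = .inr (.inr (.inl (.u ⟨(s:ℕ)+2, by have := s.isLt; omega⟩)))) := by
    intro s
    have hs := s.isLt
    exact hit hdom (.inr (.inr (.inl (.y ⟨(s:ℕ), by omega⟩))))
      {v | v = .inr (.inr (.inl (.x ⟨(s:ℕ), by omega⟩))) ∨
        v = .inr (.inr (.inl (.y ⟨(s:ℕ), by omega⟩))) ∨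
        v = .inr (.inr (.inl (.u ⟨(s:ℕ)+2, by omega⟩)))}
      (Or.inr (Or.inl rfl))
      (fun u hu => (nbhd_y hu).imp id (fun h => Or.inr h))
  choose f1 hf1S hf1 using hit1
  choose f2 hf2S hf2 using hit2
  choose f3 hf3S hf3 using hit3
  choose f4 hf4S hf4 using hit4
  choose f5 hf5S hf5 using hit5
  -- u0 and u1 are in S, by cut-vertex arguments
  have hn0 : (0 : ℕ) < 2*n+6 := by omega
  have hs1H : inH (f5 ⟨0, hn0⟩) ∧
      f5 ⟨0, hn0⟩ ≠ .inr (.inr (.inl (.u ⟨0, by omega⟩))) ∧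
      f5 ⟨0, hn0⟩ ≠ .inr (.inr (.inl (.u ⟨1, by omega⟩))) := by
    rcases hf5 ⟨0, hn0⟩ with h | h | h <;> rw [h] <;>
      exact ⟨trivial, by simp [Fin.ext_iff], by simp [Fin.ext_iff]⟩
  have hs2H : ¬ inH (f1 ⟨0, hk⟩) := by
    rcases hf1 ⟨0, hk⟩ with h | h | h <;> rw [h] <;> exact fun h => h
  have hu0S : (.inr (.inr (.inl (.u ⟨0, by omega⟩))) : GVert k n) ∈ S := by
    obtain ⟨w⟩ := hconn.preconnected ⟨f1 ⟨0, hk⟩, hf1S ⟨0, hk⟩⟩ ⟨f5 ⟨0, hn0⟩, hf5S ⟨0, hn0⟩⟩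
    obtain ⟨z, -, hz⟩ := exists_mem_support (fun z : ↥S => inH z.val) Subtype.val
      (.inr (.inr (.inl (.u ⟨0, by omega⟩))))
      (fun x y hadj hx hy => cross_u0 hadj hx hy) w hs2H hs1H.1
    exact hz ▸ z.2
  have hu1S : (.inr (.inr (.inl (.u ⟨1, by omega⟩))) : GVert k n) ∈ S := by
    obtain ⟨w⟩ := hconn.preconnected ⟨f1 ⟨0, hk⟩, hf1S ⟨0, hk⟩⟩ ⟨f5 ⟨0, hn0⟩, hf5S ⟨0, hn0⟩⟩
    obtain ⟨z, -, hz⟩ := exists_mem_support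
      (fun z : ↥S => inH z.val ∧ z.val ≠ .inr (.inr (.inl (.u ⟨0, by omega⟩))))
      Subtype.val (.inr (.inr (.inl (.u ⟨1, by omega⟩))))
      (fun x y hadj hx hy => cross_u1 hadj hx hy) w
      (fun hc => hs2H hc.1) ⟨hs1H.1, hs1H.2.1⟩
    exact hz ▸ z.2
  -- the injection
  have hmem : ∀ t, pickFun f1 f2 f3 f4 f5 t ∈ S := by
    rintro ((i | i | i) | j | s | (u | u))
    exacts [hf1S i, hf2S i, hf3S i, hf4S j, hf5S s, hu0S, hu1S]
  have htag : ∀ t, tag k n (pickFun f1 f2 f3 f4 f5 t) = some t := by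
    rintro ((i | i | i) | j | s | (u | u))
    · rcases hf1 i with h | h | h <;>
        (show tag k n (f1 i) = _; rw [h]) <;> rfl
    · rcases hf2 i with h | h <;>
        (show tag k n (f2 i) = _; rw [h]) <;> rfl
    · rcases hf3 i with h | h | h <;>
        (show tag k n (f3 i) = _; rw [h]) <;> rfl
    · rcases hf4 j with h | h <;>
        (show tag k n (f4 j) = _; rw [h]) <;> rfl
    · have hs := s.isLt
      rcases hf5 s with h | h | h <;> (show tag k n (f5 s) = _; rw [h])
      · exact congrArg some (congrArg _ (congrArg _ (congrArg _ (Fin.ext rfl))))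
      · exact congrArg some (congrArg _ (congrArg _ (congrArg _ (Fin.ext rfl))))
      · rw [tag_u, if_neg (by simp), if_neg (by simp), dif_pos (by simpa using by omega)]
        exact congrArg some (congrArg _ (congrArg _ (congrArg _ (Fin.ext (by simp)))))
    · cases u
      show tag k n (.inr (.inr (.inl (.u ⟨0, by omega⟩)))) = _
      rw [tag_u, if_pos rfl]
    · cases u
      show tag k n (.inr (.inr (.inl (.u ⟨1, by omega⟩)))) = _
      rw [tag_u, if_neg (by simp), if_pos rfl]
  have hinj : Function.Injective
      (fun t => (⟨pickFun f1 f2 f3 f4 f5 t, hmem t⟩ : ↥S)) := by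
    intro t1 t2 h
    have h' : pickFun f1 f2 f3 f4 f5 t1 = pickFun f1 f2 f3 f4 f5 t2 :=
      congrArg Subtype.val h
    have h2 := congrArg (tag k n) h'
    rw [htag, htag] at h2
    exact Option.some_injective _ h2
  have hcard := Nat.card_le_card_of_injective _ hinj
  rw [Nat.card_coe_set_eq] at hcard
  have hTT : Nat.card (TT k n) = 3 * k + 3 * n + 8 := by
    simp [Nat.card_eq_fintype_card]
    omega
  omega
theorem connDomNum_graphGF_of_even (k n : ℕ) (hk : 1 ≤ k) (hkeven : Even k)
    (hn : 1 ≤ n) (F : Fin n → Finset (Fin k)) (hF : ∀ j, (F j).Nonempty) :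
    connDomNum (graphGF k n F) = 3 * k + 3 * n + 8 := by
  classical
  have hmem : (3 * k + 3 * n + 8) ∈
      {m | ∃ S : Set (GVert k n), IsConnDomSet (graphGF k n F) S ∧ S.ncard = m} := by
    refine ⟨upSet k n, ⟨upSet_dom k n hkeven F hF, upSet_connected k n hk F hF⟩, ?_⟩
    rw [← coe_upFinset, Set.ncard_coe_finset, upFinset_card]
  rw [connDomNum]
  apply le_antisymm (Nat.sInf_le hmem)
  obtain ⟨S, hS, hcard⟩ := Nat.sInf_mem (⟨_, hmem⟩ :
    {m | ∃ S : Set (GVert k n), IsConnDomSet (graphGF k n F) S ∧ S.ncard = m}.Nonempty)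
  calc 3 * k + 3 * n + 8 ≤ S.ncard := lower_bound k n hk hn F S hS
  _ = _ := hcard

end CDG
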